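/- arXiv:1503.02948 — 7 statements merged into one kernel-verified Lean document; each statement's English description precedes it below -/
import Mathlib

section
/- Let a, d, k, b be integers with a > 0 and d > 0, and define B = ⌈(d * ⌈(a*b + k)/d⌉ - k) / a⌉ (ceilings of rational divisions). Then for every integer e with b ≤ e < B, d does not divide a*e + k. -/
theorem stmt_4 (a d k b : ℤ) (ha : 0 < a) (hd : 0 < d) :
    ∀ e : ℤ, b ≤ e →
      e < ⌈((d * ⌈((a * b + k : ℤ) : ℚ) / (d : ℚ)⌉ - k : ℤ) : ℚ) / (a : ℚ)⌉ →
      ¬ d ∣ a * e + k := by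
  rintro e hbe hlt ⟨m, hm⟩
  set C := ⌈((a * b + k : ℤ) : ℚ) / (d : ℚ)⌉ with hC
  have hm' : (a:ℚ) * e + k = d * m := by exact_mod_cast congrArg (Int.cast : ℤ → ℚ) hm
  have hbe' : (b:ℚ) ≤ e := by exact_mod_cast hbe
  have ha' : (0:ℚ) < a := by exact_mod_cast ha
  have hd' : (0:ℚ) < d := by exact_mod_cast hd
  have h2 : C ≤ m := Int.ceil_le.mpr (by
    rw [div_le_iff₀ hd']
    push_cast
    nlinarith)
  have h2' : (C:ℚ) ≤ m := by exact_mod_cast h2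
  have h4 : ⌈((d * C - k : ℤ) : ℚ) / (a : ℚ)⌉ ≤ e := Int.ceil_le.mpr (by
    rw [div_le_iff₀ ha']
    push_cast
    nlinarith)
  omega
end

section
/- Let a, d, k, b be integers with a > 0 and d > 0, and define B = ⌊(d * ⌊(a*b + k)/d⌋ - k) / a⌋ (floors of rational divisions). Then for every integer e with B < e ≤ b, d does not divide a*e + k. -/
lemma floor_div_pos (m n : ℤ) (hn : 0 < n) : ⌊((m : ℚ) / (n : ℚ))⌋ = m / n := by
  have : ((n : ℤ) : ℚ) = ((n.toNat : ℕ) : ℚ) := by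
    norm_cast; omega
  rw [this, Rat.floor_intCast_div_natCast]
  congr 1
  omega

theorem stmt_5 (a d k b : ℤ) (ha : 0 < a) (hd : 0 < d) :
    ∀ e : ℤ, e ≤ b →
      ⌊((d * ⌊((a * b + k : ℤ) : ℚ) / (d : ℚ)⌋ - k : ℤ) : ℚ) / (a : ℚ)⌋ < e →
      ¬ d ∣ a * e + k := by
  intro e heb hlt ⟨q, hq⟩
  rw [floor_div_pos _ _ hd, floor_div_pos _ _ ha] at hlt
  have h1 : q ≤ (a * b + k) / d := by
    have : (a * e + k) / d ≤ (a * b + k) / d :=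
      Int.ediv_le_ediv hd (by nlinarith)
    rwa [hq, Int.mul_ediv_cancel_left _ hd.ne'] at this
  have h2 : a * e ≤ d * ((a * b + k) / d) - k := by nlinarith
  have h3 : e ≤ (d * ((a * b + k) / d) - k) / a :=
    (Int.le_ediv_iff_mul_le ha).mpr (by linarith [h2])
  omega
end

section
/- Let a, b, c, d, p, q, s be integers with a > 0, b > 0, c > 0, d > 0, and let m = lcm(a, a*d / gcd(a*d, c)) - 1. Then (∃ x : ℤ, -a*x + p ≤ 0 ∧ b*x - q ≤ 0 ∧ d ∣ c*x + s) ↔ (∃ k : ℤ, 0 ≤ k ∧ k ≤ m ∧ b*p - a*q + b*k ≤ 0 ∧ a ∣ k + p ∧ a*d ∣ c*p + a*s + c*k). -/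
theorem stmt_7 (a b c d p q s : ℤ) (ha : 0 < a) (hb : 0 < b) (hc : 0 < c) (hd : 0 < d)
    (m : ℤ) (hm : m = Int.lcm a ((a * d) / (Int.gcd (a * d) c : ℤ)) - 1) :
    (∃ x : ℤ, -a * x + p ≤ 0 ∧ b * x - q ≤ 0 ∧ d ∣ c * x + s) ↔
    (∃ k : ℤ, 0 ≤ k ∧ k ≤ m ∧ b * p - a * q + b * k ≤ 0 ∧ a ∣ k + p ∧
      a * d ∣ c * p + a * s + c * k) := by
  set g : ℤ := (Int.gcd (a * d) c : ℤ) with hg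
  set g' : ℤ := (a * d) / g with hg'
  set L : ℤ := (Int.lcm a g' : ℤ) with hL
  have had : 0 < a * d := mul_pos ha hd
  have hgpos : 0 < g := by
    have h1 : a * d ≠ 0 := had.ne'
    exact Int.natCast_pos.mpr (Int.gcd_pos_of_ne_zero_left c h1)
  have hgdvd : g ∣ a * d := Int.gcd_dvd_left (a * d) c
  have hgc : g ∣ c := Int.gcd_dvd_right (a * d) c
  have hgg' : g * g' = a * d := Int.mul_ediv_cancel' hgdvd
  have hg'pos : 0 < g' := by
    by_contra h
    push_neg at h
    nlinarith [mul_nonpos_of_nonneg_of_nonpos hgpos.le h]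
  have hLpos : 0 < L := by
    have h1 : Int.lcm a g' ≠ 0 := Int.lcm_ne_zero ha.ne' hg'pos.ne'
    exact Int.natCast_pos.mpr (Nat.pos_of_ne_zero h1)
  have haL : a ∣ L := Int.dvd_lcm_left a g'
  have hg'L : g' ∣ L := Int.dvd_lcm_right a g'
  have hadcg' : a * d ∣ c * g' := by
    rcases hgc with ⟨c', hc'⟩
    exact ⟨c', by rw [hc', ← hgg']; ring⟩
  have hadcL : a * d ∣ c * L := hadcg'.trans (mul_dvd_mul_left c hg'L)
  have hdcLa : d ∣ c * (L / a) := by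
    have h1 : c * L = a * (c * (L / a)) := by
      rw [← mul_assoc, mul_comm a c, mul_assoc, Int.mul_ediv_cancel' haL]
    have h2 : a * d ∣ a * (c * (L / a)) := h1 ▸ hadcL
    exact (mul_dvd_mul_iff_left ha.ne').mp h2
  constructor
  · rintro ⟨x, h1, h2, h3⟩
    have hxp : 0 ≤ a * x - p := by linarith
    set t : ℤ := (a * x - p) / L with ht
    set k : ℤ := (a * x - p) % L with hk
    have hk0 : 0 ≤ k := Int.emod_nonneg _ hLpos.ne'
    have hkL : k < L := Int.emod_lt_of_pos _ hLpos
    have ht0 : 0 ≤ t := Int.ediv_nonneg hxp hLpos.le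
    have hkeq : k = a * x - p - L * t := by
      rw [hk, ht, Int.emod_def]
    set x' : ℤ := x - (L / a) * t with hx'
    have hax' : a * x' = a * x - L * t := by
      rw [hx', mul_sub, ← mul_assoc, Int.mul_ediv_cancel' haL]
    have hkp : k + p = a * x' := by rw [hax']; linarith
    refine ⟨k, hk0, ?_, ?_, ⟨x', by linarith [hkp]⟩, ?_⟩
    · rw [hm]; linarith
    · have hx'le : x' ≤ x := by
        have h4 : 0 ≤ (L / a) * t := mul_nonneg (Int.ediv_nonneg hLpos.le ha.le) ht0
        linarith
      have hbx' : b * x' ≤ q :=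
        le_trans (mul_le_mul_of_nonneg_left hx'le hb.le) (by linarith)
      have h6 : a * (b * x' - q) ≤ 0 :=
        mul_nonpos_of_nonneg_of_nonpos ha.le (by linarith)
      have h7 : b * (k + p) = a * (b * x') := by rw [hkp]; ring
      nlinarith [h6, h7]
    · have hd1 : d ∣ c * x' + s := by
        have h5 : c * x' + s = (c * x + s) - c * (L / a) * t := by rw [hx']; ring
        rw [h5]
        exact dvd_sub h3 (Dvd.dvd.mul_right hdcLa t)
      have h8 : c * p + a * s + c * k = a * (c * x' + s) := by
        linear_combination c * hkp
      rw [h8]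
      exact mul_dvd_mul_left a hd1
  · rintro ⟨k, hk0, hkm, hineq, ⟨x, hx⟩, hdvd⟩
    refine ⟨x, by linarith, ?_, ?_⟩
    · have h7 : b * (k + p) = a * (b * x) := by rw [hx]; ring
      have h8 : a * (b * x) ≤ a * q := by nlinarith [h7]
      have := le_of_mul_le_mul_left h8 ha
      linarith
    · have h1 : c * p + a * s + c * k = a * (c * x + s) := by
        linear_combination c * hx
      rw [h1] at hdvd
      exact (mul_dvd_mul_iff_left ha.ne').mp hdvd
end

section
/- Let a, b, c, d, p, q, s, k be integers with a > 0, b > 0, c > 0, d > 0. If 0 ≤ k, b*p - a*q + b*k ≤ 0, a ∣ k + p, and a*d ∣ c*p + a*s + c*k, then x := (k + p) / a is an integer satisfying -a*x + p ≤ 0, b*x - q ≤ 0, and d ∣ c*x + s. -/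
theorem stmt_8 (a b c d p q s k : ℤ) (ha : 0 < a) (hb : 0 < b) (hc : 0 < c) (hd : 0 < d)
    (hk0 : 0 ≤ k) (hineq : b * p - a * q + b * k ≤ 0) (hdiva : a ∣ k + p)
    (hdivad : a * d ∣ c * p + a * s + c * k) :
    -a * ((k + p) / a) + p ≤ 0 ∧ b * ((k + p) / a) - q ≤ 0 ∧ d ∣ c * ((k + p) / a) + s := by
  have hx : a * ((k + p) / a) = k + p := Int.mul_ediv_cancel' hdiva
  refine ⟨by nlinarith, ?_, ?_⟩
  · have h1 : a * (b * ((k + p) / a)) = b * (k + p) := by ring_nf; nlinarith [hx]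
    have h2 : a * (b * ((k + p) / a)) ≤ a * q := by rw [h1]; nlinarith
    have := le_of_mul_le_mul_left h2 ha
    linarith
  · have h3 : a * d ∣ a * (c * ((k + p) / a) + s) := by
      have : a * (c * ((k + p) / a) + s) = c * p + a * s + c * k := by
        have : a * (c * ((k + p) / a)) = c * (k + p) := by
          rw [mul_left_comm, hx]
        linarith [this]
      rw [this]; exact hdivad
    exact (mul_dvd_mul_iff_left (ne_of_gt ha)).mp h3
end

section
/- Let a₁, a₂, d₁, d₂, p₁, p₂ be integers with a₁ > 0, a₂ > 0, d₁ > 0, d₂ > 0. Let d = gcd(a₁*d₂, a₂*d₁) and let c₁, c₂ be integers with c₁*a₁*d₂ + c₂*a₂*d₁ = d. Then for every integer x: (d₁ ∣ a₁*x + p₁ ∧ d₂ ∣ a₂*x + p₂) ↔ (d₁*d₂ ∣ d*x + c₁*d₂*p₁ + c₂*d₁*p₂ ∧ d ∣ -a₁*p₂ + a₂*p₁). -/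
theorem stmt_10 (a₁ a₂ d₁ d₂ p₁ p₂ c₁ c₂ : ℤ)
    (ha₁ : 0 < a₁) (ha₂ : 0 < a₂) (hd₁ : 0 < d₁) (hd₂ : 0 < d₂)
    (d : ℤ) (hdef : d = Int.gcd (a₁ * d₂) (a₂ * d₁))
    (hbezout : c₁ * a₁ * d₂ + c₂ * a₂ * d₁ = d) :
    ∀ x : ℤ, (d₁ ∣ a₁ * x + p₁ ∧ d₂ ∣ a₂ * x + p₂) ↔
      (d₁ * d₂ ∣ d * x + c₁ * d₂ * p₁ + c₂ * d₁ * p₂ ∧ d ∣ -a₁ * p₂ + a₂ * p₁) := by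
  intro x
  have hg1 : d ∣ a₁ * d₂ := hdef ▸ Int.gcd_dvd_left (a₁ * d₂) (a₂ * d₁)
  have hg2 : d ∣ a₂ * d₁ := hdef ▸ Int.gcd_dvd_right (a₁ * d₂) (a₂ * d₁)
  have hdne : d ≠ 0 := by
    rw [hdef]
    have h1 : a₁ * d₂ ≠ 0 := by positivity
    simp only [ne_eq, Int.natCast_eq_zero, Int.gcd_eq_zero_iff]
    tauto
  constructor
  · rintro ⟨⟨k₁, hk₁⟩, ⟨k₂, hk₂⟩⟩
    refine ⟨⟨c₁ * k₁ + c₂ * k₂, by linear_combination c₁ * d₂ * hk₁ + c₂ * d₁ * hk₂ - x * hbezout⟩, ?_⟩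
    have h1 : d ∣ a₂ * d₁ * k₁ := Dvd.dvd.mul_right hg2 k₁
    have h2 : d ∣ a₁ * d₂ * k₂ := Dvd.dvd.mul_right hg1 k₂
    have : -a₁ * p₂ + a₂ * p₁ = a₂ * d₁ * k₁ - a₁ * d₂ * k₂ := by
      linear_combination a₂ * hk₁ - a₁ * hk₂
    rw [this]
    exact dvd_sub h1 h2
  · rintro ⟨⟨m, hm⟩, ⟨e, he⟩⟩
    obtain ⟨u, hu⟩ := hg1
    obtain ⟨v, hv⟩ := hg2
    constructor
    · refine ⟨u * m + c₂ * e, ?_⟩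
      have : d * (a₁ * x + p₁) = d * (d₁ * (u * m + c₂ * e)) := by
        linear_combination a₁ * hm - p₁ * hbezout + c₂ * d₁ * he + d₁ * m * hu
      exact mul_left_cancel₀ hdne this
    · refine ⟨v * m - c₁ * e, ?_⟩
      have : d * (a₂ * x + p₂) = d * (d₂ * (v * m - c₁ * e)) := by
        linear_combination a₂ * hm - p₂ * hbezout - c₁ * d₂ * he + d₂ * m * hv
      exact mul_left_cancel₀ hdne this
end

section
/- Let a, b, p, q be integers with a > 0, b > 0, and let m = a - 1. Then (∃ x : ℤ, -a*x + p ≤ 0 ∧ b*x - q ≤ 0) ↔ (∃ k : ℤ, 0 ≤ k ∧ k ≤ m ∧ b*p - a*q + b*k ≤ 0 ∧ a ∣ k + p). -/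
theorem stmt_11 (a b p q : ℤ) (ha : 0 < a) (hb : 0 < b) :
    (∃ x : ℤ, -a * x + p ≤ 0 ∧ b * x - q ≤ 0) ↔
    (∃ k : ℤ, 0 ≤ k ∧ k ≤ a - 1 ∧ b * p - a * q + b * k ≤ 0 ∧ a ∣ k + p) := by
  constructor
  · rintro ⟨x, h1, h2⟩
    refine ⟨(-p) % a, Int.emod_nonneg _ (ne_of_gt ha), ?_, ?_, ?_⟩
    · have := Int.emod_lt_of_pos (-p) ha; omega
    · have hd := Int.emod_add_mul_ediv (-p) a
      -- k + p = -(a * ((-p)/a)) since k = -p - a*((-p)/a)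
      have hlt := Int.emod_lt_of_pos (-p) ha
      have hnn := Int.emod_nonneg (-p) (ne_of_gt ha)
      set x' : ℤ := (-p) / a with hx'
      have hk : (-p) % a + p = a * (-x') := by linarith
      have hx'le : -x' ≤ x := by nlinarith
      nlinarith [mul_le_mul_of_nonneg_left hx'le hb.le, mul_le_mul_of_nonneg_left h2 ha.le, mul_le_mul_of_nonneg_left (mul_le_mul_of_nonneg_left hx'le hb.le) ha.le]
    · exact ⟨-((-p) / a), by have := Int.emod_add_mul_ediv (-p) a; linarith⟩
  · rintro ⟨k, hk0, hk1, hk2, ⟨x, hx⟩⟩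
    exact ⟨x, by nlinarith, by nlinarith⟩
end

section
/- Let a, b, p, q, k be integers with a > 0, b > 0, a ∣ k + p, and b*p - a*q + b*k ≤ 0 and 0 ≤ k. Then the integer x = (k + p)/a satisfies ⌈p/a⌉ ≤ x ≤ ⌊q/b⌋. -/
theorem stmt_15 (a b p q k : ℤ) (ha : 0 < a) (hb : 0 < b)
    (hdiv : a ∣ k + p) (hineq : b * p - a * q + b * k ≤ 0) (hk0 : 0 ≤ k) :
    ⌈((p : ℚ)) / (a : ℚ)⌉ ≤ (k + p) / a ∧ (k + p) / a ≤ ⌊((q : ℚ)) / (b : ℚ)⌋ := by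
  obtain ⟨x, hx⟩ := hdiv
  have hxe : (k + p) / a = x := by rw [hx]; exact Int.mul_ediv_cancel_left _ ha.ne'
  rw [hxe]
  have haQ : (0:ℚ) < (a:ℚ) := by exact_mod_cast ha
  have hbQ : (0:ℚ) < (b:ℚ) := by exact_mod_cast hb
  constructor
  · rw [Int.ceil_le, div_le_iff₀ haQ]
    have : p ≤ x * a := by nlinarith [hx]
    exact_mod_cast this
  · rw [Int.le_floor, le_div_iff₀ hbQ]
    have : x * b ≤ q := by nlinarith [hx]
    exact_mod_cast this
end
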